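/- Let q(x) = C·exp(−ψ(|x|)) on ℝ^d with ψ of von Mises type (ψ' > 0 eventually, ψ → ∞, a' → 0 where a = 1/ψ'), and a regularly varying. If R = R_n is chosen so that n·a(R)·R^{d−1}·e^{−ψ(R)} ~ (log n)^{−1}, then n·∫_{|x|≥R_n} q(x) dx → 0 as n → ∞, and hence the probability that a Poisson process 𝒫_n with intensity n·q contains no point outside B(0,R_n) tends to 1. -/

import Mathlib

open Filter Topology MeasureTheory ProbabilityTheory
open Set

lemma aux_poisson_prob {Ω : Type*} [MeasureSpace Ω] [IsProbabilityMeasure (ℙ : Measure Ω)]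
    (N : ℕ → Ω → ℕ) (lam : ℕ → ℝ)
    (hmap : ∀ n, Measure.map (N n) ℙ = poissonMeasure (Real.toNNReal (lam n)))
    (hlam : Tendsto lam atTop (𝓝 0)) :
    Tendsto (fun n => ℙ {ω | N n ω = 0}) atTop (𝓝 1) := by
  have key : ∀ n, ℙ {ω | N n ω = 0} =
      ENNReal.ofReal (Real.exp (-(Real.toNNReal (lam n) : ℝ))) := by
    intro n
    have hae : AEMeasurable (N n) ℙ := by
      by_contra h
      have h0 : Measure.map (N n) ℙ = 0 := Measure.map_of_not_aemeasurable h
      have := hmap n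
      rw [h0] at this
      have h1 : (0 : Measure ℕ) Set.univ = poissonMeasure (Real.toNNReal (lam n)) Set.univ := by
        rw [this]
      simp [measure_univ] at h1
    have hpre : {ω | N n ω = 0} = N n ⁻¹' {0} := rfl
    rw [hpre, ← Measure.map_apply_of_aemeasurable hae (measurableSet_singleton 0), hmap n]
    rw [poissonMeasure_singleton]
    norm_num
  simp only [key]
  have h1 : Tendsto (fun n => (Real.toNNReal (lam n) : ℝ)) atTop (𝓝 0) := by
    have : Tendsto (fun n => max (lam n) 0) atTop (𝓝 (max 0 0)) := hlam.max tendsto_const_nhds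
    simpa [Real.coe_toNNReal'] using this
  have h2 : Tendsto (fun n => Real.exp (-(Real.toNNReal (lam n) : ℝ))) atTop (𝓝 1) := by
    have h1' : Tendsto (fun n => -(Real.toNNReal (lam n) : ℝ)) atTop (𝓝 0) := by
      simpa using h1.neg
    have := (Real.continuous_exp.tendsto 0).comp h1'
    simpa [Function.comp_def] using this
  have := (ENNReal.continuous_ofReal.tendsto 1).comp h2
  simpa [Function.comp_def] using this

lemma aux_mono (ψ ψ' a : ℝ → ℝ) (z₀ : ℝ)
    (hC1 : ∀ z ∈ Set.Ici z₀, HasDerivAt ψ (ψ' z) z)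
    (hψ'pos : ∀ z ∈ Set.Ici z₀, 0 < ψ' z)
    (ha : ∀ z, a z = 1 / ψ' z)
    (haLittle : (fun z => a z) =o[atTop] (fun z : ℝ => z))
    (s : ℝ) (hs : 0 < s) :
    ∃ z₁ : ℝ, (z₀ ≤ z₁ ∧ 1 ≤ z₁) ∧
      ∀ z ∈ Set.Ici z₁, ∀ r ∈ Set.Ici z, ψ z + s * (Real.log r - Real.log z) ≤ ψ r := by
  have hev := haLittle.def (show (0:ℝ) < 1/s by positivity)
  rw [eventually_atTop] at hev
  obtain ⟨z₂, hz₂⟩ := hev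
  refine ⟨max (max z₀ 1) z₂, ⟨le_max_of_le_left (le_max_left _ _),
    le_max_of_le_left (le_max_right _ _)⟩, ?_⟩
  set z₁ := max (max z₀ 1) z₂ with hz₁def
  have hz₁0 : (1:ℝ) ≤ z₁ := le_max_of_le_left (le_max_right _ _)
  have hder : ∀ t ∈ Set.Ici z₁, HasDerivAt (fun t => ψ t - s * Real.log t) (ψ' t - s * t⁻¹) t := by
    intro t ht
    have ht1 : (1:ℝ) ≤ t := le_trans hz₁0 ht
    have htz₀ : z₀ ≤ t := le_trans (le_max_of_le_left (le_max_left _ _)) ht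
    exact (hC1 t htz₀).sub ((Real.hasDerivAt_log (by linarith)).const_mul s)
  have hmono : MonotoneOn (fun t => ψ t - s * Real.log t) (Set.Ici z₁) := by
    apply monotoneOn_of_deriv_nonneg (convex_Ici z₁)
    · exact fun t ht => (hder t ht).continuousAt.continuousWithinAt
    · intro t ht
      rw [interior_Ici] at ht
      exact ((hder t (Set.mem_Ici.mpr (le_of_lt ht))).differentiableAt).differentiableWithinAt
    · intro t ht
      rw [interior_Ici] at ht
      rw [(hder t (Set.mem_Ici.mpr (le_of_lt ht))).deriv]
      have ht1 : (1:ℝ) ≤ t := le_trans hz₁0 (le_of_lt ht)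
      have htz₀ : z₀ ≤ t := le_trans (le_max_of_le_left (le_max_left _ _)) (le_of_lt ht)
      have hψ't : 0 < ψ' t := hψ'pos t htz₀
      have hat : a t = 1 / ψ' t := ha t
      have haineq : a t ≤ (1/s) * t := by
        have := hz₂ t (le_trans (le_max_right _ _) (le_of_lt ht))
        rw [Real.norm_eq_abs, Real.norm_eq_abs, abs_of_nonneg (by positivity : (0:ℝ) ≤ t)] at this
        calc a t ≤ |a t| := le_abs_self _
        _ ≤ 1/s * t := by simpa using this
      have hapos : 0 < a t := by rw [hat]; positivity
      have ht0 : (0:ℝ) < t := by linarith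
      have h2 : 1 * s ≤ t * ψ' t := by
        rw [hat] at haineq
        have ht' : 1 / s * t = t / s := by ring
        rw [ht'] at haineq
        exact (div_le_div_iff₀ hψ't hs).mp haineq
      have h1 : s * t⁻¹ ≤ ψ' t := by
        rw [← div_eq_mul_inv, div_le_iff₀ ht0]
        nlinarith
      linarith
  intro z hz r hr
  have h := hmono hz (Set.mem_Ici.mpr (le_trans hz hr)) hr
  simp only at h
  linarith [h]

lemma aux_tail_bound (d : ℕ) (hd : 1 ≤ d) (C : ℝ) (hC : 0 < C) (ψ : ℝ → ℝ)
    (q : EuclideanSpace ℝ (Fin d) → ℝ) (hq : ∀ x, q x = C * Real.exp (-ψ ‖x‖))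
    (s z : ℝ) (hzd : (d:ℝ) < s) (hz1 : 1 ≤ z)
    (hcont : ContinuousOn ψ (Set.Ici z))
    (hlow : ∀ r ∈ Set.Ici z, ψ z + s * (Real.log r - Real.log z) ≤ ψ r) :
    ∫ x in {x : EuclideanSpace ℝ (Fin d) | z ≤ ‖x‖}, q x ≤
      ((d : ℝ) * (volume (Metric.ball (0:EuclideanSpace ℝ (Fin d)) 1)).toReal * C)
        * (Real.exp (-ψ z) * z ^ (d:ℝ)) / (s - (d:ℝ)) := by
  haveI : Nontrivial (EuclideanSpace ℝ (Fin d)) :=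
    Module.nontrivial_of_finrank_pos (R := ℝ) (by rw [finrank_euclideanSpace_fin]; omega)
  have hz0 : (0:ℝ) < z := by linarith
  set A : Set (EuclideanSpace ℝ (Fin d)) := {x | z ≤ ‖x‖} with hA
  have hAmeas : MeasurableSet A := by
    have : A = (fun x : EuclideanSpace ℝ (Fin d) => ‖x‖) ⁻¹' Ici z := rfl
    rw [this]; exact measurableSet_preimage (continuous_norm.measurable) measurableSet_Ici
  set f : ℝ → ℝ := Set.indicator (Ici z) (fun r => C * Real.exp (-ψ r)) with hf
  have step1 : ∫ x in A, q x = ∫ x : EuclideanSpace ℝ (Fin d), f ‖x‖ := by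
    rw [← integral_indicator hAmeas]
    congr 1
    funext x
    by_cases h : z ≤ ‖x‖ <;> simp [Set.indicator, hA, hf, h, hq]
  have hdim : Module.finrank ℝ (EuclideanSpace ℝ (Fin d)) = d := finrank_euclideanSpace_fin
  have step2 := MeasureTheory.integral_fun_norm_addHaar
    (volume : Measure (EuclideanSpace ℝ (Fin d))) f
  rw [hdim] at step2
  -- the 1-d integrand
  set g : ℝ → ℝ := fun y => y ^ (d-1) * (C * Real.exp (-ψ y)) with hg
  have step3 : ∫ y in Ioi (0:ℝ), y ^ (d-1) • f y = ∫ y in Ici z, g y := by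
    have h1 : ∀ y : ℝ, y ^ (d-1) • f y = Set.indicator (Ici z) g y := by
      intro y
      by_cases h : y ∈ Ici z
      · rw [Set.indicator_of_mem h]
        simp only [hf, Set.indicator_of_mem h, smul_eq_mul, hg]
      · simp only [hf, Set.indicator_of_notMem h, smul_eq_mul, mul_zero]
    simp only [h1]
    rw [integral_indicator measurableSet_Ici, Measure.restrict_restrict measurableSet_Ici]
    have hIS : Ici z ∩ Ioi (0:ℝ) = Ici z :=
      Set.inter_eq_left.mpr (fun y hy => lt_of_lt_of_le hz0 hy)
    rw [hIS]
  -- majorant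
  set M : ℝ → ℝ := fun y => (C * Real.exp (-ψ z) * z ^ s) * y ^ ((d:ℝ) - 1 - s) with hM
  have hgM : ∀ y ∈ Ici z, g y ≤ M y := by
    intro y hy
    have hy0 : (0:ℝ) < y := lt_of_lt_of_le hz0 hy
    have hexp : Real.exp (-ψ y) ≤ Real.exp (-ψ z) * z ^ s * y ^ (-s) := by
      have := hlow y hy
      have h1 : Real.exp (-ψ y) ≤ Real.exp (-ψ z - s * (Real.log y - Real.log z)) :=
        Real.exp_le_exp.mpr (by linarith)
      calc Real.exp (-ψ y) ≤ Real.exp (-ψ z - s * (Real.log y - Real.log z)) := h1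
        _ = Real.exp (-ψ z) * Real.exp (Real.log z * s) * Real.exp (Real.log y * (-s)) := by
          rw [← Real.exp_add, ← Real.exp_add]; ring_nf
        _ = Real.exp (-ψ z) * z ^ s * y ^ (-s) := by
          rw [Real.rpow_def_of_pos hz0, Real.rpow_def_of_pos hy0]
    have hpow : (y : ℝ) ^ (d-1) = y ^ ((d:ℝ) - 1) := by
      rw [← Real.rpow_natCast y (d-1), Nat.cast_sub hd, Nat.cast_one]
    calc g y = y ^ ((d:ℝ)-1) * (C * Real.exp (-ψ y)) := by rw [hg]; simp only [hpow]
      _ ≤ y ^ ((d:ℝ)-1) * (C * (Real.exp (-ψ z) * z ^ s * y ^ (-s))) := by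
        apply mul_le_mul_of_nonneg_left _ (Real.rpow_nonneg hy0.le _)
        exact mul_le_mul_of_nonneg_left hexp hC.le
      _ = M y := by
        simp only [hM]
        rw [show (d:ℝ) - 1 - s = ((d:ℝ)-1) + (-s) by ring, Real.rpow_add hy0]
        ring
  have hint_rpow : IntegrableOn (fun y : ℝ => y ^ ((d:ℝ) - 1 - s)) (Ici z) :=
    (integrableOn_Ici_iff_integrableOn_Ioi).mpr
      (integrableOn_Ioi_rpow_of_lt (by linarith) hz0)
  have hintM : IntegrableOn M (Ici z) := hint_rpow.const_mul _
  have hintg : IntegrableOn g (Ici z) := by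
    apply hintM.mono'
    · apply ContinuousOn.aestronglyMeasurable _ measurableSet_Ici
      exact (continuousOn_pow _).mul
        (continuousOn_const.mul ((hcont.neg).rexp))
    · filter_upwards [ae_restrict_mem measurableSet_Ici] with y hy
      have hy0 : (0:ℝ) < y := lt_of_lt_of_le hz0 hy
      rw [Real.norm_eq_abs, abs_of_nonneg (by positivity)]
      exact hgM y hy
  have step4 : ∫ y in Ici z, g y ≤ ∫ y in Ici z, M y :=
    setIntegral_mono_on hintg hintM measurableSet_Ici hgM
  have step5 : ∫ y in Ici z, M y = (C * Real.exp (-ψ z) * z ^ s) * (z ^ ((d:ℝ) - s) / (s - d)) := by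
    simp only [hM]
    rw [MeasureTheory.integral_const_mul, integral_Ici_eq_integral_Ioi,
      integral_Ioi_rpow_of_lt (by linarith) hz0]
    congr 1
    rw [show (d:ℝ) - 1 - s + 1 = (d:ℝ) - s by ring,
      show s - (d:ℝ) = -((d:ℝ) - s) by ring, div_neg, neg_div]
  -- assemble
  rw [step1, step2, step3]
  have hvol0 : (0:ℝ) ≤ (volume (Metric.ball (0:EuclideanSpace ℝ (Fin d)) 1)).toReal :=
    ENNReal.toReal_nonneg
  have hzs : z ^ s * z ^ ((d:ℝ) - s) = z ^ (d:ℝ) := by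
    rw [← Real.rpow_add hz0]; ring_nf
  have hfinal : ∫ y in Ici z, g y ≤ C * (Real.exp (-ψ z) * z ^ (d:ℝ)) / (s - d) := by
    calc ∫ y in Ici z, g y ≤ _ := step4
      _ = (C * Real.exp (-ψ z) * z ^ s) * (z ^ ((d:ℝ) - s) / (s - d)) := step5
      _ = C * (Real.exp (-ψ z) * z ^ (d:ℝ)) / (s - d) := by
        rw [← hzs]; ring
  rw [nsmul_eq_mul, smul_eq_mul]
  calc (d:ℝ) * ((volume (Metric.ball (0:EuclideanSpace ℝ (Fin d)) 1)).toReal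
      * ∫ y in Ici z, g y)
      ≤ (d:ℝ) * ((volume (Metric.ball (0:EuclideanSpace ℝ (Fin d)) 1)).toReal
        * (C * (Real.exp (-ψ z) * z ^ (d:ℝ)) / (s - d))) := by
        apply mul_le_mul_of_nonneg_left _ (Nat.cast_nonneg d)
        exact mul_le_mul_of_nonneg_left hfinal hvol0
    _ = _ := by ring

lemma aux_self_div (ψ ψ' a : ℝ → ℝ) (z₀ : ℝ)
    (hC1 : ∀ z ∈ Set.Ici z₀, HasDerivAt ψ (ψ' z) z)
    (hψ'pos : ∀ z ∈ Set.Ici z₀, 0 < ψ' z)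
    (hψtop : Tendsto ψ atTop atTop)
    (ha : ∀ z, a z = 1 / ψ' z)
    (haRV : ∃ ρ : ℝ, ∀ t > (0 : ℝ), Tendsto (fun z => a (t * z) / a z) atTop (𝓝 (t ^ ρ))) :
    ∃ K : ℝ, 0 < K ∧ ∀ᶠ z in atTop, z ≤ K * (a z * ψ z) := by
  classical
  obtain ⟨ρ, hρ⟩ := haRV
  set m : ℝ := min (Real.exp (-(|ρ| * Real.log 2))) 2 with hm
  have hm0 : 0 < m := lt_min (Real.exp_pos _) (by norm_num)
  refine ⟨4 / m, by positivity, ?_⟩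
  by_contra hcon
  rw [Filter.not_eventually] at hcon
  -- thresholds
  obtain ⟨b, hb⟩ := (hψtop.eventually_ge_atTop 0).exists_forall_of_atTop
  set z₃ : ℝ := 2 * max b (max z₀ 1) with hz₃
  have hz₃2 : 2 ≤ z₃ := by
    have : (1:ℝ) ≤ max b (max z₀ 1) := le_trans (le_max_right _ _) (le_max_right _ _)
    linarith
  have hthr : ∀ t : ℝ, z₃ / 2 ≤ t → z₀ ≤ t ∧ 0 ≤ ψ t ∧ 0 < a t ∧ ψ' t = 1 / a t := by
    intro t ht
    have h1 : max b (max z₀ 1) ≤ t := by rw [hz₃] at ht; linarith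
    have hz₀t : z₀ ≤ t := le_trans (le_trans (le_max_left _ _) (le_max_right _ _)) h1
    have hψ't : 0 < ψ' t := hψ'pos t hz₀t
    refine ⟨hz₀t, hb t (le_trans (le_max_left _ _) h1), ?_, ?_⟩
    · rw [ha]; positivity
    · rw [ha, one_div_one_div]
  -- the bad sequence
  have hseq : ∀ k : ℕ, ∃ z : ℝ, max z₃ k ≤ z ∧ ¬ (z ≤ 4 / m * (a z * ψ z)) := by
    intro k
    obtain ⟨z, hz1, hz2⟩ := (frequently_atTop.mp hcon) (max z₃ k)
    exact ⟨z, hz1, hz2⟩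
  set u : ℕ → ℝ := fun k => (hseq k).choose with hu
  have huP : ∀ k : ℕ, max z₃ (k:ℝ) ≤ u k ∧ ¬ (u k ≤ 4 / m * (a (u k) * ψ (u k))) :=
    fun k => (hseq k).choose_spec
  have huz₃ : ∀ k, z₃ ≤ u k := fun k => le_trans (le_max_left _ _) (huP k).1
  have hutop : Tendsto u atTop atTop :=
    tendsto_atTop_mono (fun k => le_trans (le_max_right _ _) (huP k).1)
      tendsto_natCast_atTop_atTop
  have hupos : ∀ k, 0 < u k := fun k => lt_of_lt_of_le (by linarith [hz₃2] : (0:ℝ) < z₃) (huz₃ k)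
  -- measurable stand-in for a
  set aa : ℝ → ℝ := fun t => 1 / deriv ψ t with haa
  have haa_meas : Measurable aa := measurable_const.div (measurable_deriv ψ)
  have haa_eq : ∀ t : ℝ, z₀ ≤ t → aa t = a t := by
    intro t ht
    rw [haa, ha]
    simp only [(hC1 t ht).deriv]
  set f : ℕ → ℝ → ENNReal := fun k s => ENNReal.ofReal (min (a (u k) / aa (u k * s)) 2)
    with hfdef
  have hfmeas : ∀ k, Measurable (f k) := by
    intro k
    apply ENNReal.measurable_ofReal.comp
    exact (measurable_const.div (haa_meas.comp (measurable_const.mul measurable_id))).min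
      measurable_const
  set μ : Measure ℝ := volume.restrict (Icc (2⁻¹ : ℝ) 1) with hμ
  -- lower bound of liminf
  have hlower : ∀ s ∈ Icc (2⁻¹:ℝ) 1, ENNReal.ofReal m ≤ Filter.liminf (fun k => f k s) atTop := by
    intro s hs
    have hs0 : (0:ℝ) < s := lt_of_lt_of_le (by norm_num) hs.1
    have hs1 : s ≤ 1 := hs.2
    have hshalf : (2⁻¹:ℝ) ≤ s := hs.1
    have harg : ∀ k, z₀ ≤ u k * s := by
      intro k
      have h1 : z₃/2 ≤ u k * s := by nlinarith [huz₃ k, hupos k, hz₃2]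
      exact (hthr _ h1).1
    have hfeq : ∀ k, f k s = ENNReal.ofReal (min (a (u k) / a (u k * s)) 2) := by
      intro k; rw [hfdef]; simp only; rw [haa_eq _ (harg k)]
    have hr1 : Tendsto (fun z => a (s * z) / a z) atTop (𝓝 (s ^ ρ)) := hρ s hs0
    have hr2 : Tendsto (fun k => a (s * u k) / a (u k)) atTop (𝓝 (s ^ ρ)) := hr1.comp hutop
    have hsρ : 0 < s ^ ρ := Real.rpow_pos_of_pos hs0 ρ
    have hr3 : Tendsto (fun k => a (u k) / a (s * u k)) atTop (𝓝 ((s ^ ρ)⁻¹)) := by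
      have := hr2.inv₀ hsρ.ne'
      simpa [inv_div] using this
    have hr4 : Tendsto (fun k => min (a (u k) / a (u k * s)) 2) atTop
        (𝓝 (min ((s^ρ)⁻¹) 2)) := by
      have := hr3.min (tendsto_const_nhds (x := (2:ℝ)))
      simpa [mul_comm] using this
    have hr5 : Tendsto (fun k => f k s) atTop (𝓝 (ENNReal.ofReal (min ((s^ρ)⁻¹) 2))) := by
      simp only [hfeq]
      exact (ENNReal.continuous_ofReal.tendsto _).comp hr4
    rw [hr5.liminf_eq]
    apply ENNReal.ofReal_le_ofReal
    have hexp : Real.exp (-(|ρ| * Real.log 2)) ≤ (s ^ ρ)⁻¹ := by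
      have h1 : (s ^ ρ)⁻¹ = Real.exp (Real.log s * (-ρ)) := by
        rw [← Real.rpow_neg hs0.le, Real.rpow_def_of_pos hs0]
      rw [h1]
      apply Real.exp_le_exp.mpr
      have hlogs_le : Real.log s ≤ 0 := Real.log_nonpos hs0.le hs1
      have hlogs_ge : -Real.log 2 ≤ Real.log s := by
        rw [← Real.log_inv]
        exact Real.log_le_log (by norm_num) hshalf
      have h2 : |Real.log s| ≤ Real.log 2 := by
        rw [abs_le]
        exact ⟨hlogs_ge, le_trans hlogs_le (Real.log_nonneg (by norm_num))⟩
      have h3 : |Real.log s * ρ| ≤ |ρ| * Real.log 2 := by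
        rw [abs_mul]
        calc |Real.log s| * |ρ| ≤ Real.log 2 * |ρ| :=
              mul_le_mul_of_nonneg_right h2 (abs_nonneg _)
          _ = |ρ| * Real.log 2 := mul_comm _ _
      have h4 : -(Real.log s * ρ) = Real.log s * (-ρ) := by ring
      linarith [neg_abs_le (Real.log s * ρ), le_abs_self (Real.log s * ρ)]
    exact le_min (le_trans (min_le_left _ _) hexp) (min_le_right _ _)
  -- Fatou
  have hFatou : ∫⁻ s, Filter.liminf (fun k => f k s) atTop ∂μ
      ≤ Filter.liminf (fun k => ∫⁻ s, f k s ∂μ) atTop := lintegral_liminf_le hfmeas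
  have hlow2 : ENNReal.ofReal m * ENNReal.ofReal 2⁻¹
      ≤ ∫⁻ s, Filter.liminf (fun k => f k s) atTop ∂μ := by
    have h1 : ∫⁻ _ , ENNReal.ofReal m ∂μ = ENNReal.ofReal m * ENNReal.ofReal 2⁻¹ := by
      rw [lintegral_const, hμ, Measure.restrict_apply_univ, Real.volume_Icc]
      norm_num
    rw [← h1]
    apply lintegral_mono_ae
    filter_upwards [ae_restrict_mem measurableSet_Icc] with s hs
    exact hlower s hs
  -- upper bound for each k
  have hupper : ∀ k, ∫⁻ s, f k s ∂μ ≤ ENNReal.ofReal (m / 4) := by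
    intro k
    set z := u k with hzdef
    have hz3 : z₃ ≤ z := huz₃ k
    have hz0 : (0:ℝ) < z := hupos k
    have hz2 : (2:ℝ) ≤ z := le_trans hz₃2 hz3
    obtain ⟨hz₀z, hψz, hazpos, hψ'z⟩ := hthr z (by linarith)
    obtain ⟨hz₀z2, hψz2, -, -⟩ := hthr (z/2) (by linarith)
    set h : ℝ → ℝ := fun t => min (deriv ψ t) (2 / a z) with hh
    have hmeas_h : Measurable h := (measurable_deriv ψ).min measurable_const
    have hkey : ∀ s ∈ Icc (2⁻¹:ℝ) 1, min (a z / aa (z * s)) 2 = a z * h (z * s) := by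
      intro s hs
      have hzs : z₃/2 ≤ z * s := by nlinarith [hs.1, hs.2]
      obtain ⟨hz₀zs, -, hazs, hψ'zs⟩ := hthr _ hzs
      rw [hh]
      simp only
      rw [haa_eq _ hz₀zs, (hC1 _ hz₀zs).deriv, hψ'zs,
        mul_min_of_nonneg _ _ hazpos.le, mul_one_div]
      congr 1
      field_simp
    have hposbd : ∀ s ∈ Icc (2⁻¹:ℝ) 1, 0 ≤ a z * h (z*s) ∧ a z * h (z*s) ≤ 2 := by
      intro s hs
      have hzs : z₃/2 ≤ z * s := by nlinarith [hs.1, hs.2]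
      obtain ⟨hz₀zs, -, hazs, hψ'zs⟩ := hthr _ hzs
      have hder : 0 < deriv ψ (z * s) := by
        rw [(hC1 _ hz₀zs).deriv]; exact hψ'pos _ hz₀zs
      have hpos : 0 ≤ h (z*s) := by
        rw [hh]; exact le_min hder.le (by positivity)
      constructor
      · exact mul_nonneg hazpos.le hpos
      · calc a z * h (z*s) ≤ a z * (2 / a z) :=
            mul_le_mul_of_nonneg_left (min_le_right _ _) hazpos.le
          _ = 2 := by field_simp
    have hfcong : ∫⁻ s, f k s ∂μ
        = ∫⁻ s in Icc (2⁻¹:ℝ) 1, ENNReal.ofReal (a z * h (z * s)) := by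
      rw [hμ]
      apply lintegral_congr_ae
      filter_upwards [ae_restrict_mem measurableSet_Icc] with s hs
      rw [hfdef]
      simp only
      rw [hkey s hs]
    have hint : IntegrableOn (fun s => a z * h (z * s)) (Icc (2⁻¹:ℝ) 1) := by
      apply Integrable.mono' (g := fun _ => (2:ℝ))
      · exact integrableOn_const (by rw [Real.volume_Icc]; exact ENNReal.ofReal_ne_top)
      · exact (measurable_const.mul (hmeas_h.comp (measurable_const.mul measurable_id))).aestronglyMeasurable
      · filter_upwards [ae_restrict_mem measurableSet_Icc] with s hs
        rw [Real.norm_eq_abs, abs_of_nonneg (hposbd s hs).1]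
        exact (hposbd s hs).2
    have hofReal : ∫⁻ s in Icc (2⁻¹:ℝ) 1, ENNReal.ofReal (a z * h (z * s))
        = ENNReal.ofReal (∫ s in Icc (2⁻¹:ℝ) 1, a z * h (z * s)) := by
      rw [← ofReal_integral_eq_lintegral_ofReal hint]
      filter_upwards [ae_restrict_mem measurableSet_Icc] with s hs using (hposbd s hs).1
    have hFTC : ∫ t in (z*2⁻¹)..(z*1), h t ≤ ψ (z*1) - ψ (z*2⁻¹) := by
      apply intervalIntegral.integral_le_sub_of_hasDeriv_right_of_le (by nlinarith : z*2⁻¹ ≤ z*1)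
        (g' := ψ')
      · intro t ht
        have : z₀ ≤ t := by
          rcases ht with ⟨ht1, ht2⟩
          have : z/2 ≤ t := by nlinarith
          linarith [hz₀z2]
        exact ((hC1 t this).continuousAt).continuousWithinAt
      · intro t ht
        have : z₀ ≤ t := by
          rcases ht with ⟨ht1, ht2⟩
          have : z/2 ≤ t := by nlinarith
          linarith [hz₀z2]
        exact (hC1 t this).hasDerivWithinAt
      · apply Integrable.mono' (g := fun _ => 2 / a z)
        · exact integrableOn_const (by rw [Real.volume_Icc]; exact ENNReal.ofReal_ne_top)
        · exact hmeas_h.aestronglyMeasurable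
        · filter_upwards [ae_restrict_mem measurableSet_Icc] with t ht
          have htz₀ : z₀ ≤ t := by
            rcases ht with ⟨ht1, ht2⟩
            have : z/2 ≤ t := by nlinarith
            linarith [hz₀z2]
          have hder : 0 < deriv ψ t := by
            rw [(hC1 t htz₀).deriv]; exact hψ'pos _ htz₀
          rw [Real.norm_eq_abs, abs_of_nonneg (le_min hder.le (by positivity))]
          exact min_le_right _ _
      · intro t ht
        have htz₀ : z₀ ≤ t := by
          rcases ht with ⟨ht1, ht2⟩
          have : z/2 ≤ t := by nlinarith
          linarith [hz₀z2]
        rw [hh]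
        simp only
        rw [(hC1 t htz₀).deriv]
        exact min_le_left _ _
    have hreal : ∫ s in Icc (2⁻¹:ℝ) 1, a z * h (z * s) ≤ m/4 := by
      have e1 : ∫ s in Icc (2⁻¹:ℝ) 1, a z * h (z * s)
          = ∫ s in (2⁻¹:ℝ)..1, a z * h (z * s) := by
        rw [integral_Icc_eq_integral_Ioc,
          ← intervalIntegral.integral_of_le (by norm_num : (2⁻¹:ℝ) ≤ 1)]
      rw [e1, intervalIntegral.integral_const_mul,
        intervalIntegral.integral_comp_mul_left h (by positivity : z ≠ 0)]
      have hbadk : 4 / m * (a z * ψ z) < z := by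
        have := (huP k).2
        rw [← hzdef] at this
        linarith [not_le.mp this]
      have h2 : a z * (z⁻¹ • ∫ t in (z*2⁻¹)..(z*1), h t) ≤ a z * (z⁻¹ * ψ z) := by
        apply mul_le_mul_of_nonneg_left _ hazpos.le
        rw [smul_eq_mul]
        apply mul_le_mul_of_nonneg_left _ (by positivity)
        calc ∫ t in (z*2⁻¹)..(z*1), h t ≤ ψ (z*1) - ψ (z*2⁻¹) := hFTC
          _ ≤ ψ z := by
            rw [mul_one]
            have : z * 2⁻¹ = z/2 := by ring
            rw [this]
            linarith
      calc a z * (z⁻¹ • ∫ t in (z*2⁻¹)..(z*1), h t) ≤ a z * (z⁻¹ * ψ z) := h2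
        _ = a z * ψ z / z := by field_simp
        _ ≤ m/4 := by
          have h4 : 4 * (a z * ψ z) < m * z := by
            have h5 := mul_lt_mul_of_pos_left hbadk hm0
            rwa [show m * (4 / m * (a z * ψ z)) = 4 * (a z * ψ z) by field_simp] at h5
          rw [div_le_div_iff₀ hz0 (by norm_num : (0:ℝ) < 4)]
          linarith
    rw [hfcong, hofReal]
    exact ENNReal.ofReal_le_ofReal hreal
  have hlim_up : Filter.liminf (fun k => ∫⁻ s, f k s ∂μ) atTop ≤ ENNReal.ofReal (m / 4) := by
    apply Filter.liminf_le_of_frequently_le'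
    exact Filter.Frequently.of_forall hupper
  have : ENNReal.ofReal m * ENNReal.ofReal 2⁻¹ ≤ ENNReal.ofReal (m / 4) :=
    le_trans hlow2 (le_trans hFatou hlim_up)
  rw [← ENNReal.ofReal_mul hm0.le] at this
  rw [ENNReal.ofReal_le_ofReal_iff (by positivity)] at this
  linarith

set_option maxHeartbeats 1000000 in
/-- If `q(x) = C·exp(-ψ(|x|))` with `ψ` of von Mises type and `a = 1/ψ'` regularly varying,
and `R_n` is chosen so that `n·a(R_n)·R_n^{d-1}·exp(-ψ(R_n)) ~ (log n)⁻¹`, then the expected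
number of Poisson points outside `B(0,R_n)` tends to `0`, hence the probability that the
process has no points outside `B(0,R_n)` tends to `1`. -/
theorem poisson_tail_vanishes
    (d : ℕ) (hd : 1 ≤ d)
    (ψ ψ' a : ℝ → ℝ) (z₀ : ℝ)
    (hC1 : ∀ z ∈ Set.Ici z₀, HasDerivAt ψ (ψ' z) z)
    (hψ'pos : ∀ z ∈ Set.Ici z₀, 0 < ψ' z)
    (hψtop : Tendsto ψ atTop atTop)
    (ha : ∀ z, a z = 1 / ψ' z)
    (ha' : Tendsto (deriv a) atTop (𝓝 0))
    (haRV : ∃ ρ : ℝ, ∀ t > (0 : ℝ), Tendsto (fun z => a (t * z) / a z) atTop (𝓝 (t ^ ρ)))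
    (haLittle : (fun z => a z) =o[atTop] (fun z : ℝ => z))
    (C : ℝ) (hC : 0 < C)
    (q : EuclideanSpace ℝ (Fin d) → ℝ)
    (hq : ∀ x, q x = C * Real.exp (-ψ ‖x‖))
    (n₀ : ℕ) (R : ℕ → ℝ) (hRtop : Tendsto R atTop atTop)
    -- the critical-radius asymptotics: `n·a(R_n)·R_n^{d-1}·e^{-ψ(R_n)} ~ (log n)⁻¹`
    (hRasym : Tendsto
      (fun n : ℕ => (n * a (R n) * R n ^ (d - 1) * Real.exp (-ψ (R n))) * Real.log n)
      atTop (𝓝 1))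
    (Ω : Type*) [MeasureSpace Ω] [IsProbabilityMeasure (ℙ : Measure Ω)]
    -- `Cnt n A ω` is the number of points of the `n`-th Poisson process `𝒫_n` lying in `A`
    (Cnt : ℕ → Set (EuclideanSpace ℝ (Fin d)) → Ω → ℕ)
    (hPoisson : ∀ n, ∀ A, MeasurableSet A →
      Measure.map (Cnt n A) ℙ = poissonMeasure (Real.toNNReal ((n : ℝ) * ∫ x in A, q x))) :
    Tendsto (fun n : ℕ =>
        (n : ℝ) * ∫ x in {x : EuclideanSpace ℝ (Fin d) | R n ≤ ‖x‖}, q x) atTop (𝓝 0) ∧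
    Tendsto (fun n : ℕ => ℙ {ω | Cnt n {x | R n ≤ ‖x‖} ω = 0}) atTop (𝓝 1) := by
  obtain ⟨e, rfl⟩ : ∃ e, d = e + 1 := ⟨d - 1, (Nat.succ_pred_eq_of_pos hd).symm⟩
  simp only [Nat.add_sub_cancel] at hRasym
  set I : ℕ → ℝ := fun n => ∫ x in {x : EuclideanSpace ℝ (Fin (e+1)) | R n ≤ ‖x‖}, q x with hI
  have hmeasA : ∀ n, MeasurableSet {x : EuclideanSpace ℝ (Fin (e+1)) | R n ≤ ‖x‖} :=
    fun n => measurableSet_preimage continuous_norm.measurable measurableSet_Ici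
  have hq0 : ∀ x, 0 ≤ q x := fun x => by rw [hq]; positivity
  have hInonneg : ∀ n, 0 ≤ I n :=
    fun n => setIntegral_nonneg (hmeasA n) (fun x _ => hq0 x)
  obtain ⟨z₁₄, ⟨hz₁₄z₀, hz₁₄1⟩, hmono₄⟩ :=
    aux_mono ψ ψ' a z₀ hC1 hψ'pos ha haLittle (4*((e:ℝ)+1)) (by positivity)
  obtain ⟨K, hK0, hKev⟩ := aux_self_div ψ ψ' a z₀ hC1 hψ'pos hψtop ha haRV
  set cC : ℝ := ((e+1:ℕ):ℝ) *
      (volume (Metric.ball (0:EuclideanSpace ℝ (Fin (e+1))) 1)).toReal * C with hcC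
  have hcC0 : 0 ≤ cC := by
    rw [hcC]
    have := ENNReal.toReal_nonneg
      (a := volume (Metric.ball (0:EuclideanSpace ℝ (Fin (e+1))) 1))
    positivity
  set c₀ : ℝ := ψ z₁₄ - 4*((e:ℝ)+1) * Real.log z₁₄ with hc₀
  have hψ0ev : ∀ᶠ z in atTop, (0:ℝ) ≤ ψ z := hψtop.eventually_ge_atTop 0
  have hlogtop : Tendsto (fun n : ℕ => Real.log n) atTop atTop :=
    Real.tendsto_log_atTop.comp tendsto_natCast_atTop_atTop
  have hloglog : (fun n : ℕ => Real.log (Real.log n)) =o[atTop] (fun n : ℕ => Real.log n) :=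
    Real.isLittleO_log_id_atTop.comp_tendsto hlogtop
  -- the main package of eventual facts
  have hmain : ∀ᶠ n : ℕ in atTop,
      ψ (R n) ≤ 2 * Real.log n ∧ 0 < a (R n) ∧ 0 < Real.log n ∧ z₀ ≤ R n ∧ 1 ≤ R n ∧
        R n ≤ K * (a (R n) * ψ (R n)) ∧
        ((n:ℝ) * a (R n) * R n ^ e * Real.exp (-ψ (R n))) * Real.log n ≤ 2 ∧
        0 ≤ ψ (R n) := by
    filter_upwards [eventually_ge_atTop 2, hRtop.eventually_ge_atTop (max z₁₄ (max z₀ 1)),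
      hRtop.eventually hKev, hRtop.eventually (haLittle.def one_pos),
      hRasym (Ioo_mem_nhds (by norm_num : (1/2:ℝ) < 1) (by norm_num : (1:ℝ) < 2)),
      hloglog.def (by norm_num : (0:ℝ) < 1/4),
      hlogtop.eventually_ge_atTop (4 * (Real.log 2 - c₀/4)),
      hRtop.eventually hψ0ev] with n hn2 hnR hnK hna hnT hnll hnc hnψ0
    have hz₀R : z₀ ≤ R n := le_trans (le_trans (le_max_left _ _) (le_max_right _ _)) hnR
    have hR1 : (1:ℝ) ≤ R n := le_trans (le_trans (le_max_right _ _) (le_max_right _ _)) hnR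
    have hz₁₄R : z₁₄ ≤ R n := le_trans (le_max_left _ _) hnR
    have haRpos : 0 < a (R n) := by
      rw [ha]
      have := hψ'pos _ hz₀R
      positivity
    have hn1 : (1:ℝ) < (n:ℝ) := by exact_mod_cast Nat.lt_of_lt_of_le one_lt_two hn2
    have hlogpos : 0 < Real.log n := Real.log_pos hn1
    have hR0 : (0:ℝ) < R n := by linarith
    have haR : a (R n) ≤ R n := by
      rw [Real.norm_eq_abs, Real.norm_eq_abs, one_mul] at hna
      calc a (R n) ≤ |a (R n)| := le_abs_self _
        _ ≤ |R n| := hna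
        _ = R n := abs_of_nonneg hR0.le
    have hψ2 : ψ (R n) ≤ 2 * Real.log n := by
      set X : ℝ := (n:ℝ) * a (R n) * R n ^ e * Real.log n with hX
      have hRe : (0:ℝ) < R n ^ e := pow_pos hR0 e
      have hXpos : 0 < X := by
        rw [hX]
        have hn0 : (0:ℝ) < (n:ℝ) := by linarith
        positivity
      have hT1 : 1/2 < ((n:ℝ) * a (R n) * R n ^ e * Real.exp (-ψ (R n))) * Real.log n := hnT.1
      have hinv : Real.exp (-ψ (R n)) * Real.exp (ψ (R n)) = 1 := by
        rw [← Real.exp_add]; simp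
      have h5 : (1/2) * Real.exp (ψ (R n)) ≤ X * Real.exp (-ψ (R n)) * Real.exp (ψ (R n)) := by
        apply mul_le_mul_of_nonneg_right _ (Real.exp_pos _).le
        calc (1:ℝ)/2 ≤ ((n:ℝ) * a (R n) * R n ^ e * Real.exp (-ψ (R n))) * Real.log n := hT1.le
          _ = X * Real.exp (-ψ (R n)) := by rw [hX]; ring
      have h6 : X * Real.exp (-ψ (R n)) * Real.exp (ψ (R n)) = X := by
        rw [mul_assoc, hinv, mul_one]
      have hexp_le : Real.exp (ψ (R n)) ≤ 2 * X := by linarith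
      have hψlog : ψ (R n) ≤ Real.log (2 * X) := by
        rw [Real.le_log_iff_exp_le (by linarith)]
        exact hexp_le
      have hn0' : (n:ℝ) ≠ 0 := by linarith
      have hlogX : Real.log (2*X) = Real.log 2 + (Real.log n + Real.log (a (R n))
          + (e:ℝ) * Real.log (R n) + Real.log (Real.log n)) := by
        rw [hX, Real.log_mul two_ne_zero (by positivity),
          Real.log_mul (by positivity) (ne_of_gt hlogpos),
          Real.log_mul (by positivity) (by positivity),
          Real.log_mul hn0' (ne_of_gt haRpos), Real.log_pow]
        try push_cast
        try ring
      have hlogaR : Real.log (a (R n)) ≤ Real.log (R n) := Real.log_le_log haRpos haR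
      have hmono4 := hmono₄ z₁₄ (Set.mem_Ici.mpr le_rfl) (R n) (Set.mem_Ici.mpr hz₁₄R)
      have hE1 : (0:ℝ) < 4*((e:ℝ)+1) := by positivity
      have hlogR_le : Real.log (R n) ≤ (ψ (R n) - c₀) / (4*((e:ℝ)+1)) := by
        rw [le_div_iff₀ hE1]
        nlinarith [hmono4, hc₀]
      have hsum : ((e:ℝ)+1) * Real.log (R n) ≤ (ψ (R n) - c₀)/4 := by
        calc ((e:ℝ)+1) * Real.log (R n)
            ≤ ((e:ℝ)+1) * ((ψ (R n) - c₀) / (4*((e:ℝ)+1))) :=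
              mul_le_mul_of_nonneg_left hlogR_le (by positivity)
          _ = (ψ (R n) - c₀)/4 := by field_simp
      have hll : Real.log (Real.log n) ≤ (1/4) * Real.log n := by
        rw [Real.norm_eq_abs, Real.norm_eq_abs, abs_of_pos hlogpos] at hnll
        calc Real.log (Real.log n) ≤ |Real.log (Real.log n)| := le_abs_self _
          _ ≤ 1/4 * Real.log n := hnll
      have hcbd : Real.log 2 - c₀/4 ≤ (1/4) * Real.log n := by linarith
      have hcomb : ψ (R n) ≤ Real.log 2 + Real.log n + Real.log (R n)
          + (e:ℝ)*Real.log (R n) + Real.log (Real.log n) := by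
        rw [hlogX] at hψlog
        linarith
      have hexp2 : (e:ℝ)*Real.log (R n) + Real.log (R n) = ((e:ℝ)+1)*Real.log (R n) := by ring
      linarith
    exact ⟨hψ2, haRpos, hlogpos, hz₀R, hR1, hnK, hnT.2.le, hnψ0⟩
  -- Part 1
  have hpart1 : Tendsto (fun n : ℕ => (n:ℝ) * I n) atTop (𝓝 0) := by
    rw [tendsto_order]
    constructor
    · intro c hc
      filter_upwards with n
      have := mul_nonneg (Nat.cast_nonneg n : (0:ℝ) ≤ n) (hInonneg n)
      linarith
    · intro δ hδ
      set cC' : ℝ := max cC 1 with hcC'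
      have hcC'0 : 0 < cC' := lt_of_lt_of_le one_pos (le_max_right _ _)
      set s : ℝ := ((e+1:ℕ):ℝ) + 1 + 8*K*cC'/δ with hs
      have hquot : 0 ≤ 8*K*cC'/δ := by positivity
      have hsd : ((e+1:ℕ):ℝ) < s := by rw [hs]; linarith
      have hs0 : 0 < s := by
        have : (0:ℝ) ≤ ((e+1:ℕ):ℝ) := Nat.cast_nonneg _
        rw [hs]; linarith
      have hsD : 0 < s - ((e+1:ℕ):ℝ) := by linarith
      obtain ⟨z₁δ, ⟨hδz₀, hδ1⟩, hmonoδ⟩ :=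
        aux_mono ψ ψ' a z₀ hC1 hψ'pos ha haLittle s hs0
      filter_upwards [hmain, hRtop.eventually_ge_atTop z₁δ] with n hn hzn
      obtain ⟨hψ2log, haRpos, hlogpos, hz₀R, hR1, hKR, hPlog, hψ0⟩ := hn
      have hR0 : (0:ℝ) < R n := by linarith
      have htb := aux_tail_bound (e+1) (Nat.le_add_left 1 e) C hC ψ q hq s (R n) hsd hR1
        (fun t ht => (hC1 t (le_trans hz₀R ht)).continuousAt.continuousWithinAt)
        (fun r hr => hmonoδ (R n) (Set.mem_Ici.mpr hzn) r hr)
      set E : ℝ := Real.exp (-ψ (R n)) with hE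
      set Pn : ℝ := (n:ℝ) * a (R n) * R n ^ e * E with hPn
      have hE0 : 0 < E := Real.exp_pos _
      have hch1 : (n:ℝ) * I n ≤ (n:ℝ) * (cC * (E * R n ^ (((e+1:ℕ)):ℝ)) / (s - ((e+1:ℕ):ℝ))) :=
        mul_le_mul_of_nonneg_left htb (Nat.cast_nonneg n)
      have hrp : R n ^ (((e+1:ℕ)):ℝ) = R n * R n ^ e := by
        rw [Real.rpow_natCast, pow_succ]
        ring
      have h7 : R n ≤ 2*K*Real.log n * a (R n) := by
        have h71 : a (R n) * ψ (R n) ≤ a (R n) * (2 * Real.log n) :=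
          mul_le_mul_of_nonneg_left hψ2log haRpos.le
        have h72 : K * (a (R n) * ψ (R n)) ≤ K * (a (R n) * (2 * Real.log n)) :=
          mul_le_mul_of_nonneg_left h71 hK0.le
        calc R n ≤ K * (a (R n) * ψ (R n)) := hKR
          _ ≤ K * (a (R n) * (2 * Real.log n)) := h72
          _ = 2*K*Real.log n * a (R n) := by ring
      have h8 : (n:ℝ) * R n * R n ^ e * E ≤ (2*K*Real.log n) * Pn := by
        have hprod : 0 ≤ (n:ℝ) * R n ^ e * E := by positivity
        calc (n:ℝ) * R n * R n^e * E = R n * ((n:ℝ) * R n^e * E) := by ring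
          _ ≤ (2*K*Real.log n * a (R n)) * ((n:ℝ) * R n^e * E) :=
            mul_le_mul_of_nonneg_right h7 hprod
          _ = (2*K*Real.log n) * Pn := by rw [hPn]; ring
      have h9 : (2*K*Real.log n) * Pn ≤ 4*K := by
        nlinarith [hK0, hPlog]
      have h10 : (n:ℝ) * (cC * (E * R n ^ (((e+1:ℕ)):ℝ)) / (s - ((e+1:ℕ):ℝ)))
          = cC * ((n:ℝ) * R n * R n ^ e * E) / (s - ((e+1:ℕ):ℝ)) := by
        rw [hrp]; ring
      have h11 : cC * ((n:ℝ) * R n * R n ^ e * E) / (s - ((e+1:ℕ):ℝ))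
          ≤ cC * (4*K) / (s - ((e+1:ℕ):ℝ)) := by
        apply div_le_div_of_nonneg_right ?_ hsD.le
        exact mul_le_mul_of_nonneg_left (le_trans h8 h9) hcC0
      have h12 : cC * (4*K) / (s - ((e+1:ℕ):ℝ)) ≤ δ/2 := by
        rw [div_le_iff₀ hsD]
        have e1 : δ * (8*K*cC'/δ) = 8*K*cC' := mul_div_cancel₀ _ (ne_of_gt hδ)
        have e2 : cC ≤ cC' := le_max_left _ _
        have hsexp : s - ((e+1:ℕ):ℝ) = 1 + 8*K*cC'/δ := by rw [hs]; ring
        rw [hsexp]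
        nlinarith [hK0, hδ, e1, e2, hcC'0]
      have : (n:ℝ) * I n ≤ δ/2 := by
        calc (n:ℝ) * I n ≤ _ := hch1
          _ = cC * ((n:ℝ) * R n * R n ^ e * E) / (s - ((e+1:ℕ):ℝ)) := h10
          _ ≤ cC * (4*K) / (s - ((e+1:ℕ):ℝ)) := h11
          _ ≤ δ/2 := h12
      linarith
  refine ⟨hpart1, ?_⟩
  exact aux_poisson_prob (fun n => Cnt n {x | R n ≤ ‖x‖}) (fun n => (n:ℝ) * I n)
    (fun n => hPoisson n _ (hmeasA n)) hpart1
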